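/- Let f : [0,∞) → [0,∞) be continuous with f(r) = 0 for r ≥ R, and define h(x) = ∫_{|x|}^{∞} r^{(d−1)/(d+1)} f(r)^{2/(d+1)} dr on ℝ^d. If f is C¹ and positive on (0,R), then at every x with 0 < |x| < R, h is C² and satisfies ⟨Dh(x), cof(−D²h(x)) Dh(x)⟩ = f(|x|)². -/

import Mathlib

open Matrix

/-- The cofactor matrix of a square matrix. -/
noncomputable def cof {d : ℕ} (M : Matrix (Fin d) (Fin d) ℝ) : Matrix (Fin d) (Fin d) ℝ :=
  (Matrix.adjugate M)ᵀ

/-- The gradient `Df(x)` of `f : ℝ^d → ℝ` as the vector of partial derivatives. -/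
noncomputable def gradVec {d : ℕ} (f : EuclideanSpace ℝ (Fin d) → ℝ)
    (x : EuclideanSpace ℝ (Fin d)) : Fin d → ℝ :=
  fun i => fderiv ℝ f x (EuclideanSpace.single i 1)

/-- The Hessian `D²f(x)` of `f : ℝ^d → ℝ` as the matrix of second partial derivatives. -/
noncomputable def hessMat {d : ℕ} (f : EuclideanSpace ℝ (Fin d) → ℝ)
    (x : EuclideanSpace ℝ (Fin d)) : Matrix (Fin d) (Fin d) ℝ :=
  Matrix.of fun i j =>
    fderiv ℝ (fun y => fderiv ℝ f y (EuclideanSpace.single j 1)) x (EuclideanSpace.single i 1)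

open MeasureTheory Set

private lemma adj_one_add_smul {d : ℕ} (x : Fin d → ℝ) (μ : ℝ) :
    adjugate (1 + μ • vecMulVec x x) =
      (1 + μ * (x ⬝ᵥ x)) • (1 : Matrix (Fin d) (Fin d) ℝ) - μ • vecMulVec x x := by
  set s : ℝ := x ⬝ᵥ x with hs
  have hXX : vecMulVec x x * vecMulVec x x = s • vecMulVec x x := by
    ext i j
    simp only [Matrix.mul_apply, vecMulVec_apply, Matrix.smul_apply, smul_eq_mul, hs, dotProduct]
    rw [Finset.sum_mul]
    exact Finset.sum_congr rfl fun k _ => by ring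
  have key : ∀ ν : ℝ, 1 + ν * s ≠ 0 →
      adjugate (1 + ν • vecMulVec x x) =
        (1 + ν * s) • (1 : Matrix (Fin d) (Fin d) ℝ) - ν • vecMulVec x x := by
    intro ν hν
    have hdet : (1 + ν • vecMulVec x x).det = 1 + ν * s := by
      have h1 : ν • vecMulVec x x = replicateCol (Fin 1) (ν • x) * replicateRow (Fin 1) x := by
        erw [← vecMulVec_eq (Fin 1)]
        ext i j
        simp [vecMulVec_apply, mul_assoc]
      rw [h1]
      erw [det_one_add_replicateCol_mul_replicateRow (ι := Fin 1)]
      simp [hs, dotProduct, Finset.mul_sum]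
      exact Finset.sum_congr rfl fun k _ => by ring
    have hmul : (1 + ν • vecMulVec x x) *
        ((1 + ν * s) • (1 : Matrix (Fin d) (Fin d) ℝ) - ν • vecMulVec x x)
        = (1 + ν * s) • (1 : Matrix (Fin d) (Fin d) ℝ) := by
      simp only [Matrix.mul_sub, Matrix.add_mul, Matrix.one_mul, Matrix.mul_smul,
        Matrix.smul_mul, Matrix.mul_one, hXX, smul_smul]
      module
    have hBinv : (1 + ν • vecMulVec x x)⁻¹ =
        (1 + ν * s)⁻¹ • ((1 + ν * s) • (1 : Matrix (Fin d) (Fin d) ℝ) - ν • vecMulVec x x) := by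
      apply Matrix.inv_eq_right_inv
      rw [Matrix.mul_smul, hmul, smul_smul, inv_mul_cancel₀ hν, one_smul]
    have hadj : adjugate (1 + ν • vecMulVec x x) =
        (1 + ν * s) • (1 + ν • vecMulVec x x)⁻¹ := by
      rw [Matrix.inv_def, Ring.inverse_eq_inv', hdet, smul_smul, mul_inv_cancel₀ hν, one_smul]
    rw [hadj, hBinv, smul_smul, mul_inv_cancel₀ hν, one_smul]
  have hc1 : Continuous fun ν : ℝ => adjugate (1 + ν • vecMulVec x x) :=
    Continuous.matrix_adjugate (continuous_const.add (continuous_id.smul continuous_const))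
  have hc2 : Continuous fun ν : ℝ =>
      (1 + ν * s) • (1 : Matrix (Fin d) (Fin d) ℝ) - ν • vecMulVec x x :=
    ((continuous_const.add (continuous_id.mul continuous_const)).smul continuous_const).sub
      (continuous_id.smul continuous_const)
  have hdense : Dense ({-s⁻¹}ᶜ : Set ℝ) := dense_compl_singleton _
  have heq := Continuous.ext_on hdense hc1 hc2 ?_
  · exact congrFun heq μ
  · intro ν hν
    apply key
    rcases eq_or_ne s 0 with h0 | h0
    · simp [h0]
    · intro h
      apply hν
      have : ν * s = -1 := by linarith
      simp only [Set.mem_singleton_iff]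
      field_simp
      linarith

private lemma hasFDerivAt_norm_aux {E : Type*} [NormedAddCommGroup E] [InnerProductSpace ℝ E]
    {y : E} (hy : y ≠ 0) :
    HasFDerivAt (fun z : E => ‖z‖) (‖y‖⁻¹ • innerSL ℝ y) y := by
  have hny : ‖y‖ ≠ 0 := norm_ne_zero_iff.mpr hy
  have h1 : HasFDerivAt (fun z : E => ‖z‖ ^ 2) ((2 : ℕ) • innerSL ℝ y) y :=
    (hasStrictFDerivAt_norm_sq y).hasFDerivAt
  have h2 := h1.sqrt (pow_ne_zero 2 hny)
  have h3 : (fun z : E => Real.sqrt (‖z‖ ^ 2)) = fun z : E => ‖z‖ :=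
    funext fun z => Real.sqrt_sq (norm_nonneg z)
  rw [h3] at h2
  convert h2 using 1
  rw [Real.sqrt_sq (norm_nonneg y)]
  ext w
  simp only [ContinuousLinearMap.smul_apply, two_smul, ContinuousLinearMap.add_apply]
  field_simp
  ring

/-- The radial solution formula: with
`h(x) = ∫_{|x|}^∞ r^{(d−1)/(d+1)} f(r)^{2/(d+1)} dr` for a continuous compactly
supported density profile `f ≥ 0` which is `C¹` and positive on `(0,R)`, the function
`h` is `C²` at every `x` with `0 < |x| < R` and satisfies
`⟨Dh(x), cof(−D²h(x)) Dh(x)⟩ = f(|x|)²` there. -/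
theorem radial_solution_formula {d : ℕ} (hd : 1 ≤ d) (R : ℝ) (hR : 0 < R)
    (f : ℝ → ℝ) (hfc : ContinuousOn f (Ici 0)) (hf0 : ∀ r, 0 ≤ f r)
    (hfR : ∀ r, R ≤ r → f r = 0)
    (hfC1 : ContDiffOn ℝ 1 f (Ioo 0 R)) (hfpos : ∀ r ∈ Ioo 0 R, 0 < f r) :
    ∀ x : EuclideanSpace ℝ (Fin d), 0 < ‖x‖ → ‖x‖ < R →
      ContDiffAt ℝ 2
          (fun y : EuclideanSpace ℝ (Fin d) =>
            ∫ r in Ioi ‖y‖, r ^ (((d : ℝ) - 1) / (d + 1)) * f r ^ ((2 : ℝ) / (d + 1))) x ∧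
        (gradVec (fun y : EuclideanSpace ℝ (Fin d) =>
            ∫ r in Ioi ‖y‖, r ^ (((d : ℝ) - 1) / (d + 1)) * f r ^ ((2 : ℝ) / (d + 1))) x) ⬝ᵥ
          (cof (-(hessMat (fun y : EuclideanSpace ℝ (Fin d) =>
              ∫ r in Ioi ‖y‖, r ^ (((d : ℝ) - 1) / (d + 1)) * f r ^ ((2 : ℝ) / (d + 1))) x)) *ᵥ
            gradVec (fun y : EuclideanSpace ℝ (Fin d) =>
              ∫ r in Ioi ‖y‖, r ^ (((d : ℝ) - 1) / (d + 1)) * f r ^ ((2 : ℝ) / (d + 1))) x) =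
          f ‖x‖ ^ 2 := by
  intro x hx0 hxR
  set p : ℝ := ((d : ℝ) - 1) / (d + 1) with hp
  set q : ℝ := (2 : ℝ) / (d + 1) with hq
  set g : ℝ → ℝ := fun r => r ^ p * f r ^ q with hg
  set v : ℝ → ℝ := fun t => ∫ r in Ioi t, g r with hv
  have hFv : (fun y : EuclideanSpace ℝ (Fin d) => ∫ r in Ioi ‖y‖, g r)
      = fun y : EuclideanSpace ℝ (Fin d) => v ‖y‖ := rfl
  rw [hFv]
  have hd1 : (0:ℝ) < (d:ℝ) + 1 := by positivity
  have hq0 : 0 < q := by rw [hq]; positivity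
  have hx0' : x ≠ 0 := by intro h; rw [h] at hx0; simp at hx0
  set r0 : ℝ := ‖x‖ with hr0
  -- continuity of g on (0, ∞)
  have hgc : ∀ t : ℝ, 0 < t → ContinuousAt g t := by
    intro t ht
    have h2 : ContinuousAt f t := hfc.continuousAt (Ici_mem_nhds ht)
    have h3 : ContinuousAt (fun r : ℝ => f r ^ q) t :=
      (Real.continuousAt_rpow_const (f t) q (Or.inr hq0.le)).comp h2
    exact (Real.continuousAt_rpow_const t p (Or.inl ht.ne')).mul h3
  have hgR : ∀ r : ℝ, R ≤ r → g r = 0 := by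
    intro r hr
    simp [hg, hfR r hr, Real.zero_rpow hq0.ne']
  -- integrability
  have hgint : ∀ s : ℝ, 0 < s → IntegrableOn g (Ioi s) := by
    intro s hs
    have h1 : IntegrableOn g (Ioc s R) := by
      apply (ContinuousOn.integrableOn_Icc ?_).mono_set Ioc_subset_Icc_self
      exact fun t ht => (hgc t (lt_of_lt_of_le hs ht.1)).continuousWithinAt
    have h2 : IntegrableOn g (Ioi R) := by
      exact integrableOn_zero.congr_fun (fun r hr => (hgR r (le_of_lt hr)).symm)
        measurableSet_Ioi
    apply (h1.union h2).mono_set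
    intro t ht
    rcases le_or_gt t R with h | h
    · exact Or.inl ⟨ht, h⟩
    · exact Or.inr h
  -- splitting identity for v
  have hsplit : ∀ a b : ℝ, 0 < a → a ≤ b → v a = (∫ t in Ioc a b, g t) + v b := by
    intro a b ha hab
    rw [hv]
    rw [← setIntegral_union Ioc_disjoint_Ioi_same measurableSet_Ioi
      ((hgint a ha).mono_set Ioc_subset_Ioi_self) (hgint b (lt_of_lt_of_le ha hab)),
      Ioc_union_Ioi_eq_Ioi hab]
  have hvF : ∀ s : ℝ, 0 < s → v s = v r0 - ∫ t in r0..s, g t := by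
    intro s hs
    rcases le_total r0 s with h | h
    · rw [intervalIntegral.integral_of_le h, hsplit r0 s hx0 h]; ring
    · rw [intervalIntegral.integral_of_ge h, hsplit s r0 hs h]; ring
  -- FTC
  have hFderiv : ∀ s : ℝ, 0 < s →
      HasDerivAt (fun t => ∫ u in r0..t, g u) (g s) s := by
    intro s hs
    apply intervalIntegral.integral_hasDerivAt_right
    · rw [intervalIntegrable_iff]
      exact ((hgint (min r0 s) (lt_min hx0 hs)).mono_set Ioc_subset_Ioi_self)
    · exact ContinuousAt.stronglyMeasurableAtFilter isOpen_Ioi (fun t ht => hgc t ht) s hs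
    · exact hgc s hs
  have hvderiv : ∀ s : ℝ, 0 < s → HasDerivAt v (-g s) s := by
    intro s hs
    have h1 : HasDerivAt (fun t => v r0 - ∫ u in r0..t, g u) (-g s) s := by
      have := (hasDerivAt_const s (v r0)).sub (hFderiv s hs)
      simp only [zero_sub] at this
      exact this
    apply h1.congr_of_eventuallyEq
    filter_upwards [Ioi_mem_nhds hs] with t ht
    exact hvF t ht
  -- C¹ of g on (0,R)
  have hgC1 : ∀ s ∈ Ioo (0:ℝ) R, ContDiffAt ℝ 1 g s := by
    intro s hs
    have hf1 : ContDiffAt ℝ 1 f s := hfC1.contDiffAt (Ioo_mem_nhds hs.1 hs.2)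
    have h2 : ContDiffAt ℝ 1 (fun r : ℝ => f r ^ q) s :=
      (Real.contDiffAt_rpow_const_of_ne (hfpos s hs).ne').comp s hf1
    exact (Real.contDiffAt_rpow_const_of_ne hs.1.ne').mul h2
  -- C² of v at r0
  have hFC2 : ContDiffAt ℝ 2 (fun t => ∫ u in r0..t, g u) r0 := by
    rw [show ((2 : WithTop ℕ∞)) = ((1 : ℕ) + 1 : ℕ) by norm_cast]
    apply contDiffAt_succ_iff_hasFDerivAt.mpr
    refine ⟨fun t => ContinuousLinearMap.smulRight (1 : ℝ →L[ℝ] ℝ) (g t),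
      ⟨Ioi 0, Ioi_mem_nhds hx0, fun t ht => (hFderiv t ht).hasFDerivAt⟩, ?_⟩
    exact (ContinuousLinearMap.smulRightL ℝ ℝ ℝ (1 : ℝ →L[ℝ] ℝ)).contDiff.contDiffAt.comp r0
      (hgC1 r0 ⟨hx0, hxR⟩)
  have hv2 : ContDiffAt ℝ 2 v r0 := by
    apply ((contDiffAt_const (c := v r0)).sub hFC2).congr_of_eventuallyEq
    filter_upwards [Ioi_mem_nhds hx0] with t ht
    exact hvF t ht
  refine ⟨hv2.comp x (contDiffAt_norm ℝ hx0'), ?_⟩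
  -- ### second part : the PDE
  have hDh : ∀ y : EuclideanSpace ℝ (Fin d), 0 < ‖y‖ →
      HasFDerivAt (fun z : EuclideanSpace ℝ (Fin d) => v ‖z‖)
        ((-g ‖y‖) • (‖y‖⁻¹ • innerSL ℝ y)) y := by
    intro y hy
    exact (hvderiv ‖y‖ hy).comp_hasFDerivAt y (hasFDerivAt_norm_aux (norm_pos_iff.mp hy))
  -- gradient
  set x' : Fin d → ℝ := fun i => x i with hx'
  set β : ℝ := g r0 * r0⁻¹ with hβ
  have hgr0pos : 0 < g r0 := by
    have h1 := hfpos r0 ⟨hx0, hxR⟩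
    rw [hg]
    have h2 : (0:ℝ) < r0 ^ p := Real.rpow_pos_of_pos hx0 p
    have h3 : (0:ℝ) < f r0 ^ q := Real.rpow_pos_of_pos h1 q
    positivity
  have hβpos : 0 < β := by rw [hβ]; positivity
  have hgrad : gradVec (fun y : EuclideanSpace ℝ (Fin d) => v ‖y‖) x = (-β) • x' := by
    funext i
    show fderiv ℝ (fun y : EuclideanSpace ℝ (Fin d) => v ‖y‖) x (EuclideanSpace.single i 1) = _
    rw [(hDh x hx0).fderiv]
    simp only [ContinuousLinearMap.smul_apply, innerSL_apply_apply, smul_eq_mul,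
      EuclideanSpace.inner_single_right, conj_trivial, Pi.smul_apply, hx', hβ]
    ring
  -- the function ψ
  set ψ : ℝ → ℝ := fun t => -g t * t⁻¹ with hψ
  have hψC1 : ContDiffAt ℝ 1 ψ r0 :=
    ((hgC1 r0 ⟨hx0, hxR⟩).neg).mul (contDiffAt_inv ℝ hx0.ne')
  obtain ⟨γ0, hψd⟩ : ∃ γ0, HasDerivAt ψ γ0 r0 :=
    ⟨_, (hψC1.differentiableAt one_ne_zero).hasDerivAt⟩
  have hnbhd : (fun y : EuclideanSpace ℝ (Fin d) => ‖y‖) ⁻¹' (Ioo 0 R) ∈ nhds x :=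
    (continuous_norm.continuousAt (x := x)).preimage_mem_nhds (Ioo_mem_nhds hx0 hxR)
  have hEv : ∀ j : Fin d,
      (fun y : EuclideanSpace ℝ (Fin d) =>
          fderiv ℝ (fun z : EuclideanSpace ℝ (Fin d) => v ‖z‖) y (EuclideanSpace.single j 1))
        =ᶠ[nhds x] fun y : EuclideanSpace ℝ (Fin d) => ψ ‖y‖ * y j := by
    intro j
    filter_upwards [hnbhd] with y hy
    rw [(hDh y hy.1).fderiv]
    simp only [ContinuousLinearMap.smul_apply, innerSL_apply_apply, smul_eq_mul,
      EuclideanSpace.inner_single_right, conj_trivial, hψ]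
    ring
  have hφ : ∀ j : Fin d, HasFDerivAt (fun y : EuclideanSpace ℝ (Fin d) => ψ ‖y‖ * y j)
      (ψ r0 • (EuclideanSpace.proj j : EuclideanSpace ℝ (Fin d) →L[ℝ] ℝ)
        + x j • (γ0 • (r0⁻¹ • innerSL ℝ x))) x := by
    intro j
    have h1 : HasFDerivAt (fun y : EuclideanSpace ℝ (Fin d) => ψ ‖y‖)
        (γ0 • (r0⁻¹ • innerSL ℝ x)) x :=
      by have := hψd.comp_hasFDerivAt x (hasFDerivAt_norm_aux hx0'); exact this
    have h2 : HasFDerivAt (fun y : EuclideanSpace ℝ (Fin d) => y j)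
        (EuclideanSpace.proj j : EuclideanSpace ℝ (Fin d) →L[ℝ] ℝ) x :=
      ContinuousLinearMap.hasFDerivAt (EuclideanSpace.proj (𝕜 := ℝ) j : EuclideanSpace ℝ (Fin d) →L[ℝ] ℝ)
    exact h1.mul h2
  have hhess : ∀ i j : Fin d, hessMat (fun y : EuclideanSpace ℝ (Fin d) => v ‖y‖) x i j
      = ψ r0 * (if i = j then 1 else 0) + x j * (γ0 * (r0⁻¹ * x i)) := by
    intro i j
    show fderiv ℝ (fun y : EuclideanSpace ℝ (Fin d) =>
        fderiv ℝ (fun z : EuclideanSpace ℝ (Fin d) => v ‖z‖) y (EuclideanSpace.single j 1)) x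
        (EuclideanSpace.single i 1) = _
    rw [(hEv j).fderiv_eq, (hφ j).fderiv]
    simp only [ContinuousLinearMap.add_apply, ContinuousLinearMap.smul_apply,
      PiLp.proj_apply, EuclideanSpace.single_apply, innerSL_apply_apply, smul_eq_mul,
      EuclideanSpace.inner_single_right, conj_trivial]
    by_cases hij : i = j
    · simp [hij]
    · have hji : ¬ j = i := fun h => hij h.symm
      simp [hij, hji]
  set γ : ℝ := -(γ0 * r0⁻¹) with hγ
  have hA : -(hessMat (fun y : EuclideanSpace ℝ (Fin d) => v ‖y‖) x)
      = β • (1 : Matrix (Fin d) (Fin d) ℝ) + γ • vecMulVec x' x' := by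
    ext i j
    simp only [Matrix.neg_apply, hhess i j, Matrix.add_apply, Matrix.smul_apply,
      Matrix.one_apply, vecMulVec_apply, smul_eq_mul, hβ, hγ, hψ, hx']
    by_cases hij : i = j
    · simp only [hij, if_true]; ring
    · simp only [hij, if_false]; ring
  -- symmetry / cofactor
  have hXsym : (vecMulVec x' x')ᵀ = vecMulVec x' x' := by
    ext i j; simp [vecMulVec_apply, mul_comm]
  have hA2 : β • (1 : Matrix (Fin d) (Fin d) ℝ) + γ • vecMulVec x' x'
      = β • ((1 : Matrix (Fin d) (Fin d) ℝ) + (γ / β) • vecMulVec x' x') := by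
    rw [smul_add, smul_smul, mul_comm β (γ / β), div_mul_cancel₀ _ hβpos.ne']
  have hcof : cof (-(hessMat (fun y : EuclideanSpace ℝ (Fin d) => v ‖y‖) x))
      = β ^ (d - 1) • ((1 + (γ / β) * (x' ⬝ᵥ x')) • (1 : Matrix (Fin d) (Fin d) ℝ)
          - (γ / β) • vecMulVec x' x') := by
    rw [cof, hA, Matrix.adjugate_transpose, transpose_add, transpose_smul, transpose_smul,
      transpose_one, hXsym, hA2, Matrix.adjugate_smul, adj_one_add_smul, Fintype.card_fin]
  rw [hgrad, hcof]
  -- the vector algebra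
  have hXu : ∀ w : Fin d → ℝ, vecMulVec x' x' *ᵥ w = (x' ⬝ᵥ w) • x' := by
    intro w; funext i
    simp only [Matrix.mulVec, dotProduct, vecMulVec_apply, Pi.smul_apply, smul_eq_mul]
    rw [Finset.sum_mul]
    exact Finset.sum_congr rfl fun k _ => by ring
  rw [Matrix.smul_mulVec, Matrix.sub_mulVec, Matrix.smul_mulVec,
    Matrix.smul_mulVec, Matrix.one_mulVec, hXu]
  simp only [dotProduct_smul, smul_dotProduct, dotProduct_sub, smul_eq_mul]
  -- now a scalar identity
  have hss : x' ⬝ᵥ x' = r0 ^ 2 := by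
    have h1 : (inner ℝ x x : ℝ) = ‖x‖ ^ 2 := real_inner_self_eq_norm_sq x
    rw [PiLp.inner_apply] at h1
    simp only [RCLike.inner_apply, conj_trivial] at h1
    rw [← hr0] at h1
    rw [← h1, dotProduct]
  rw [hss]
  have hβpow : β ^ (d - 1) * β ^ 2 = β ^ (d + 1) := by
    rw [← pow_add]; congr 1; omega
  have hgpow : g r0 ^ (d + 1) = r0 ^ (d - 1) * f r0 ^ 2 := by
    rw [hg, mul_pow, ← Real.rpow_natCast (r0 ^ p) (d + 1), ← Real.rpow_natCast (f r0 ^ q) (d + 1),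
      ← Real.rpow_mul hx0.le, ← Real.rpow_mul (hf0 r0)]
    have e1 : p * ((d + 1 : ℕ) : ℝ) = ((d - 1 : ℕ) : ℝ) := by
      rw [hp]
      push_cast [Nat.cast_sub hd]
      field_simp
    have e2 : q * ((d + 1 : ℕ) : ℝ) = (2 : ℝ) := by
      rw [hq]; push_cast; field_simp
    rw [e1, e2, Real.rpow_natCast, Real.rpow_two]
  have hfinal : β ^ (d + 1) * r0 ^ 2 = f r0 ^ 2 := by
    rw [hβ, mul_pow, hgpow, inv_pow]
    have h2 : r0 ^ (d - 1) * r0 ^ 2 = r0 ^ (d + 1) := by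
      rw [← pow_add]; congr 1; omega
    have h3 : (r0 : ℝ) ^ (d + 1) ≠ 0 := pow_ne_zero _ hx0.ne'
    field_simp
    linear_combination f r0 ^ 2 * h2
  linear_combination hfinal + r0 ^ 2 * hβpow
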